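/- For every fixed Γ with 0 < Γ < 1, there exists a* ∈ (0,1) such that K(a*,Γ) ≥ K(a,Γ) for all a ∈ [0,1), and moreover K(a*,Γ) > K(0,Γ); i.e., for SNR below one a nonzero correlation strictly improves the error exponent over independent samples. -/

import Mathlib

/-- The steady-state prediction error variance `P(a, Γ)`: the unique positive root of
`P² + (1 − a²)(1 − Γ)P − Γ(1 − a²) = 0`, given in closed form. -/
noncomputable def Pss (a Γ : ℝ) : ℝ :=
  ((1 - a ^ 2) * (Γ - 1) +
    Real.sqrt ((1 - a ^ 2) ^ 2 * (1 - Γ) ^ 2 + 4 * Γ * (1 - a ^ 2))) / 2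

/-- The steady-state Kalman gain factor `K_p = a·P/(1+P)`. -/
noncomputable def Kgain (a Γ : ℝ) : ℝ := a * Pss a Γ / (1 + Pss a Γ)

/-- `P̃ = K_p²/(1 − (a − K_p)²)`, the solution of the Lyapunov equation. -/
noncomputable def Ptilde (a Γ : ℝ) : ℝ :=
  (Kgain a Γ) ^ 2 / (1 - (a - Kgain a Γ) ^ 2)

/-- The closed-form error exponent `K(a, Γ) = ½·log(1+P) + ½·(1+P̃)/(1+P) − ½`. -/
noncomputable def Kexp (a Γ : ℝ) : ℝ :=
  (1 / 2) * Real.log (1 + Pss a Γ) + (1 / 2) * (1 + Ptilde a Γ) / (1 + Pss a Γ) - 1 / 2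


noncomputable def pA (Γ s : ℝ) : ℝ :=
  ((1 - s) * (Γ - 1) + Real.sqrt ((1 - s) ^ 2 * (1 - Γ) ^ 2 + 4 * Γ * (1 - s))) / 2

noncomputable def gA (Γ s : ℝ) : ℝ :=
  (1 / 2) * Real.log (1 + pA Γ s) +
    (1 / 2) * (1 + s * (pA Γ s) ^ 2 / ((1 + pA Γ s) ^ 2 - s)) / (1 + pA Γ s) - 1 / 2


lemma qpos (Γ s : ℝ) (hΓ0 : 0 < Γ) (hs : s < 1) :
    0 < (1 - s) ^ 2 * (1 - Γ) ^ 2 + 4 * Γ * (1 - s) := by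
  have h1 : 0 ≤ (1 - s) ^ 2 * (1 - Γ) ^ 2 := by positivity
  have h2 : 0 < 4 * Γ * (1 - s) := by nlinarith
  linarith

lemma ppos (Γ s : ℝ) (hΓ0 : 0 < Γ) (hΓ1 : Γ < 1) (hs0 : 0 ≤ s) (hs : s < 1) :
    0 < pA Γ s := by
  unfold pA
  have hb : 0 ≤ (1 - s) * (1 - Γ) := by nlinarith
  have h : (1 - s) * (1 - Γ) < Real.sqrt ((1 - s) ^ 2 * (1 - Γ) ^ 2 + 4 * Γ * (1 - s)) := by
    rw [show (1-s)^2*(1-Γ)^2 = ((1-s)*(1-Γ))^2 by ring]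
    have := Real.lt_sqrt (x := (1-s)*(1-Γ)) (y := ((1-s)*(1-Γ))^2 + 4*Γ*(1-s)) (by nlinarith)
    rw [this]
    nlinarith
  nlinarith

lemma psq (Γ s : ℝ) (hΓ0 : 0 < Γ) (hΓ1 : Γ < 1) (hs0 : 0 ≤ s) (hs : s < 1) :
    (pA Γ s) ^ 2 = Γ * (1 - s) - (1 - s) * (1 - Γ) * pA Γ s := by
  have hq : 0 ≤ (1 - s) ^ 2 * (1 - Γ) ^ 2 + 4 * Γ * (1 - s) := (qpos Γ s hΓ0 hs).le
  have hD : (Real.sqrt ((1 - s) ^ 2 * (1 - Γ) ^ 2 + 4 * Γ * (1 - s))) ^ 2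
      = (1 - s) ^ 2 * (1 - Γ) ^ 2 + 4 * Γ * (1 - s) := Real.sq_sqrt hq
  unfold pA
  linear_combination hD / 4

lemma psq_le (Γ s : ℝ) (hΓ0 : 0 < Γ) (hΓ1 : Γ < 1) (hs0 : 0 ≤ s) (hs : s < 1) :
    (pA Γ s) ^ 2 ≤ Γ * (1 - s) := by
  have h := psq Γ s hΓ0 hΓ1 hs0 hs
  have hp := (ppos Γ s hΓ0 hΓ1 hs0 hs).le
  nlinarith [mul_nonneg (mul_nonneg (by linarith : (0:ℝ) ≤ 1 - s) (by linarith : (0:ℝ) ≤ 1 - Γ)) hp]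

lemma p_le_sqrt (Γ s : ℝ) (hΓ0 : 0 < Γ) (hΓ1 : Γ < 1) (hs0 : 0 ≤ s) (hs : s < 1) :
    pA Γ s ≤ Real.sqrt (1 - s) := by
  have h := psq_le Γ s hΓ0 hΓ1 hs0 hs
  have hp := (ppos Γ s hΓ0 hΓ1 hs0 hs).le
  rw [show pA Γ s = Real.sqrt ((pA Γ s)^2) by rw [Real.sqrt_sq hp]]
  apply Real.sqrt_le_sqrt
  nlinarith

lemma g_bound (Γ s : ℝ) (hΓ0 : 0 < Γ) (hΓ1 : Γ < 1) (hs0 : 0 ≤ s) (hs : s < 1) :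
    gA Γ s ≤ (3/4) * Real.sqrt (1 - s) := by
  set P := pA Γ s with hPdef
  have hP : 0 < P := ppos Γ s hΓ0 hΓ1 hs0 hs
  have hden : 2 * P ≤ (1 + P) ^ 2 - s := by nlinarith
  have hden0 : 0 < (1 + P) ^ 2 - s := by nlinarith
  have hPt0 : 0 ≤ s * P ^ 2 / ((1 + P) ^ 2 - s) := by positivity
  have hPt : s * P ^ 2 / ((1 + P) ^ 2 - s) ≤ P / 2 := by
    rw [div_le_iff₀ hden0]
    nlinarith [sq_nonneg P, mul_nonneg hs0 (sq_nonneg P)]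
  have hlog : Real.log (1 + P) ≤ P := by
    have := Real.log_le_sub_one_of_pos (x := 1 + P) (by linarith)
    linarith
  have hfrac : (1 + s * P ^ 2 / ((1 + P) ^ 2 - s)) / (1 + P) ≤ 1 + s * P ^ 2 / ((1 + P) ^ 2 - s) := by
    apply div_le_self (by linarith) (by linarith)
  have hPle : P ≤ Real.sqrt (1 - s) := p_le_sqrt Γ s hΓ0 hΓ1 hs0 hs
  unfold gA
  rw [← hPdef]
  have : (1/2 : ℝ) * (1 + s * P ^ 2 / ((1 + P) ^ 2 - s)) / (1 + P)
      = (1/2 : ℝ) * ((1 + s * P ^ 2 / ((1 + P) ^ 2 - s)) / (1 + P)) := by ring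
  rw [this]
  nlinarith

lemma p_zero (Γ : ℝ) (hΓ0 : 0 < Γ) : pA Γ 0 = Γ := by
  unfold pA
  rw [show (1 - (0:ℝ)) ^ 2 * (1 - Γ) ^ 2 + 4 * Γ * (1 - 0) = (1 + Γ) ^ 2 by ring,
    Real.sqrt_sq (by linarith)]
  ring

lemma g_zero (Γ : ℝ) (hΓ0 : 0 < Γ) :
    gA Γ 0 = (1/2) * Real.log (1 + Γ) + (1/2) / (1 + Γ) - 1/2 := by
  unfold gA
  rw [p_zero Γ hΓ0]
  norm_num

lemma g_zero_pos (Γ : ℝ) (hΓ0 : 0 < Γ) : 0 < gA Γ 0 := by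
  rw [g_zero Γ hΓ0]
  have h1 : (0:ℝ) < 1 + Γ := by linarith
  have h2 := Real.log_lt_sub_one_of_pos (x := (1 + Γ)⁻¹) (by positivity)
    (by rw [ne_eq, inv_eq_one]; intro h; linarith)
  rw [Real.log_inv] at h2
  have h3 : (1 + Γ)⁻¹ - 1 = -(Γ / (1 + Γ)) := by field_simp; ring
  rw [h3] at h2
  have h4 : Real.log (1 + Γ) > Γ / (1 + Γ) := by linarith
  have h5 : (1:ℝ)/2 / (1 + Γ) - 1/2 = - (1/2) * (Γ / (1+Γ)) := by field_simp; ring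
  nlinarith

lemma p_cont (Γ : ℝ) : Continuous (pA Γ) := by
  unfold pA
  fun_prop

lemma g_contOn (Γ : ℝ) (hΓ0 : 0 < Γ) (hΓ1 : Γ < 1) :
    ContinuousOn (gA Γ) (Set.Ico 0 1) := by
  have hp := (p_cont Γ).continuousOn (s := Set.Ico (0:ℝ) 1)
  have h1 : ∀ s ∈ Set.Ico (0:ℝ) 1, 1 + pA Γ s ≠ 0 := fun s hs => by
    have := ppos Γ s hΓ0 hΓ1 hs.1 hs.2; linarith
  have h2 : ∀ s ∈ Set.Ico (0:ℝ) 1, (1 + pA Γ s) ^ 2 - s ≠ 0 := fun s hs => by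
    have := ppos Γ s hΓ0 hΓ1 hs.1 hs.2; nlinarith [hs.1, hs.2]
  unfold gA
  apply ContinuousOn.sub _ continuousOn_const
  apply ContinuousOn.add
  · exact ContinuousOn.mul continuousOn_const (ContinuousOn.log (by fun_prop) h1)
  · apply ContinuousOn.div _ (by fun_prop) h1
    apply ContinuousOn.mul continuousOn_const
    apply ContinuousOn.add continuousOn_const
    exact ContinuousOn.div (by fun_prop) (by fun_prop) h2


lemma kexp_eq (Γ a : ℝ) (hΓ0 : 0 < Γ) (hΓ1 : Γ < 1) (ha0 : 0 ≤ a) (ha1 : a < 1) :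
    Kexp a Γ = gA Γ (a ^ 2) := by
  have hs0 : (0:ℝ) ≤ a ^ 2 := by positivity
  have hs1 : a ^ 2 < 1 := by nlinarith
  have hPe : Pss a Γ = pA Γ (a ^ 2) := rfl
  set P := pA Γ (a ^ 2) with hPdef
  have hP : 0 < P := ppos Γ _ hΓ0 hΓ1 hs0 hs1
  have h1P : (1 + P) ≠ 0 := by linarith
  have hden : (1 + P) ^ 2 - a ^ 2 ≠ 0 := by nlinarith
  have hKg : Kgain a Γ = a * P / (1 + P) := by rw [Kgain, hPe]
  have hsub : a - Kgain a Γ = a / (1 + P) := by rw [hKg]; field_simp; ring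
  have hPt : Ptilde a Γ = a ^ 2 * P ^ 2 / ((1 + P) ^ 2 - a ^ 2) := by
    rw [Ptilde, hsub, hKg]
    rw [div_pow, div_pow]
    rw [show (1:ℝ) - a ^ 2 / (1 + P) ^ 2 = ((1 + P) ^ 2 - a ^ 2) / (1 + P) ^ 2 by field_simp]
    rw [div_div_div_cancel_right₀]
    · congr 1; ring
    · positivity
  unfold Kexp gA
  rw [hPt, hPe]

lemma g_deriv (Γ : ℝ) (hΓ0 : 0 < Γ) (hΓ1 : Γ < 1) :
    HasDerivAt (gA Γ) (Γ ^ 2 * (1 - Γ) / (2 * (1 + Γ) ^ 3)) 0 := by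
  have h1Γ : (0:ℝ) < 1 + Γ := by linarith
  have h1Γ' : (1 + Γ : ℝ) ≠ 0 := by linarith
  -- derivative of 1 - s
  have h1 : HasDerivAt (fun s : ℝ => 1 - s) (-1) 0 := by
    simpa using (hasDerivAt_id (0:ℝ)).const_sub 1
  -- derivative of q
  have hq : HasDerivAt (fun s : ℝ => (1 - s) ^ 2 * (1 - Γ) ^ 2 + 4 * Γ * (1 - s))
      (-(2 * (1 + Γ ^ 2))) 0 := by
    have h2 := (h1.pow 2).mul_const ((1 - Γ) ^ 2)
    have h3 := h1.const_mul (4 * Γ)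
    refine (h2.add h3).congr_deriv ?_
    norm_num; ring
  -- derivative of sqrt q
  have hq0 : ((1:ℝ) - 0) ^ 2 * (1 - Γ) ^ 2 + 4 * Γ * (1 - 0) = (1 + Γ) ^ 2 := by ring
  have hsq : HasDerivAt (fun s : ℝ => Real.sqrt ((1 - s) ^ 2 * (1 - Γ) ^ 2 + 4 * Γ * (1 - s)))
      (-(1 + Γ ^ 2) / (1 + Γ)) 0 := by
    have := hq.sqrt (by rw [hq0]; positivity)
    convert this using 1
    rw [hq0, Real.sqrt_sq h1Γ.le]
    field_simp
  -- derivative of p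
  have hp : HasDerivAt (pA Γ) (-(Γ ^ 2) / (1 + Γ)) 0 := by
    unfold pA
    have h4 : HasDerivAt (fun s : ℝ => (1 - s) * (Γ - 1)) (-(Γ - 1)) 0 := by
      simpa using h1.mul_const (Γ - 1)
    have := (h4.add hsq).div_const 2
    refine this.congr_deriv ?_
    field_simp
    ring
  have hp0 : pA Γ 0 = Γ := p_zero Γ hΓ0
  -- derivative of 1 + p
  have hp1 : HasDerivAt (fun s => 1 + pA Γ s) (-(Γ ^ 2) / (1 + Γ)) 0 := hp.const_add 1
  -- log term
  have hlog : HasDerivAt (fun s => Real.log (1 + pA Γ s)) ((-(Γ ^ 2) / (1 + Γ)) / (1 + Γ)) 0 := by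
    have := hp1.log (by simp [hp0]; linarith)
    simpa [hp0] using this
  -- p^2
  have hp2 : HasDerivAt (fun s => (pA Γ s) ^ 2) (2 * Γ * (-(Γ ^ 2) / (1 + Γ))) 0 := by
    have := hp.pow 2
    refine this.congr_deriv ?_
    simp [hp0]
  -- (1+p)^2 - s
  have hd2 : HasDerivAt (fun s => (1 + pA Γ s) ^ 2 - s)
      (2 * (1 + Γ) * (-(Γ ^ 2) / (1 + Γ)) - 1) 0 := by
    have := (hp1.pow 2).sub (hasDerivAt_id 0)
    refine this.congr_deriv ?_
    simp [hp0]
  -- u = p^2 / ((1+p)^2 - s)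
  have hu : HasDerivAt (fun s => (pA Γ s) ^ 2 / ((1 + pA Γ s) ^ 2 - s))
      ((2 * Γ * (-(Γ ^ 2) / (1 + Γ)) * ((1 + Γ) ^ 2 - 0)
        - Γ ^ 2 * (2 * (1 + Γ) * (-(Γ ^ 2) / (1 + Γ)) - 1)) / ((1 + Γ) ^ 2 - 0) ^ 2) 0 := by
    have := hp2.div hd2 (by simp [hp0]; positivity)
    refine this.congr_deriv ?_
    simp [hp0]
  -- s * u
  have hsu : HasDerivAt (fun s => s * ((pA Γ s) ^ 2 / ((1 + pA Γ s) ^ 2 - s)))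
      (Γ ^ 2 / (1 + Γ) ^ 2) 0 := by
    have := (hasDerivAt_id (0:ℝ)).mul hu
    refine this.congr_deriv ?_
    simp [hp0]
  -- numerator N
  have hN : HasDerivAt (fun s => 1 + s * ((pA Γ s) ^ 2 / ((1 + pA Γ s) ^ 2 - s)))
      (Γ ^ 2 / (1 + Γ) ^ 2) 0 := hsu.const_add 1
  -- fraction (1/2) * N / (1+p)
  have hfrac : HasDerivAt (fun s => (1/2) * (1 + s * ((pA Γ s) ^ 2 / ((1 + pA Γ s) ^ 2 - s))) / (1 + pA Γ s))
      (((1/2) * (Γ ^ 2 / (1 + Γ) ^ 2) * (1 + Γ) - (1/2) * 1 * (-(Γ ^ 2) / (1 + Γ))) / (1 + Γ) ^ 2) 0 := by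
    have := (hN.const_mul (1/2)).div hp1 (by simp [hp0]; linarith)
    refine this.congr_deriv ?_
    simp [hp0]
  -- combine
  have hg := ((hlog.const_mul (1/2)).add hfrac).sub_const (1/2)
  have : gA Γ = fun s => (1/2) * Real.log (1 + pA Γ s)
      + (1/2) * (1 + s * ((pA Γ s) ^ 2 / ((1 + pA Γ s) ^ 2 - s))) / (1 + pA Γ s) - 1/2 := by
    funext s; unfold gA; ring
  rw [this]
  refine hg.congr_deriv ?_
  field_simp
  ring

lemma exists_gt (Γ : ℝ) (hΓ0 : 0 < Γ) (hΓ1 : Γ < 1) :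
    ∃ s ∈ Set.Ioo (0:ℝ) 1, gA Γ 0 < gA Γ s := by
  have hg := g_deriv Γ hΓ0 hΓ1
  have hc : 0 < Γ ^ 2 * (1 - Γ) / (2 * (1 + Γ) ^ 3) := by
    have : (0:ℝ) < 1 + Γ := by linarith
    have : (0:ℝ) < 1 - Γ := by linarith
    positivity
  have ht : Filter.Tendsto (slope (gA Γ) 0) (nhdsWithin 0 (Set.Ioi 0))
      (nhds (Γ ^ 2 * (1 - Γ) / (2 * (1 + Γ) ^ 3))) :=
    (hasDerivAt_iff_tendsto_slope.mp hg).mono_left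
      (nhdsWithin_mono _ (fun x hx => ne_of_gt hx))
  have h3 : ∀ᶠ s in nhdsWithin (0:ℝ) (Set.Ioi 0), 0 < slope (gA Γ) 0 s :=
    ht.eventually (eventually_gt_nhds hc)
  have h4 : ∀ᶠ s in nhdsWithin (0:ℝ) (Set.Ioi 0), s ∈ Set.Ioo (0:ℝ) 1 := by
    filter_upwards [Ioo_mem_nhdsGT (one_pos : (0:ℝ) < 1)] with s hs using hs
  obtain ⟨s, hslope, hmem⟩ := (h3.and h4).exists
  refine ⟨s, hmem, ?_⟩
  rw [slope_def_field] at hslope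
  have hs0 : 0 < s := hmem.1
  have := mul_pos hslope (sub_pos.mpr (show (0:ℝ) < s from hs0))
  rw [div_mul_cancel₀] at this
  · linarith
  · simpa using hs0.ne'

/-- For every fixed `0 < Γ < 1` there exists `astar ∈ (0,1)` maximizing `K(·,Γ)` over `[0,1)`,
and this maximum strictly exceeds the value at zero correlation. -/
theorem exists_optimal_correlation_of_snr_lt_one (Γ : ℝ) (hΓ0 : 0 < Γ) (hΓ1 : Γ < 1) :
    ∃ astar ∈ Set.Ioo (0 : ℝ) 1,
      (∀ a ∈ Set.Ico (0 : ℝ) 1, Kexp a Γ ≤ Kexp astar Γ) ∧ Kexp 0 Γ < Kexp astar Γ := by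
  have hg0 : 0 < gA Γ 0 := g_zero_pos Γ hΓ0
  have hK0 : Kexp 0 Γ = gA Γ 0 := by
    have := kexp_eq Γ 0 hΓ0 hΓ1 le_rfl one_pos
    simpa using this
  obtain ⟨s0, hs0mem, hgt⟩ := exists_gt Γ hΓ0 hΓ1
  set a0 := Real.sqrt s0 with ha0def
  have ha0pos : 0 < a0 := Real.sqrt_pos.mpr hs0mem.1
  have ha0lt : a0 < 1 := by
    rw [ha0def, show (1:ℝ) = Real.sqrt 1 by simp]
    exact Real.sqrt_lt_sqrt hs0mem.1.le hs0mem.2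
  have ha0sq : a0 ^ 2 = s0 := Real.sq_sqrt hs0mem.1.le
  have hKa0 : Kexp a0 Γ = gA Γ s0 := by
    rw [kexp_eq Γ a0 hΓ0 hΓ1 ha0pos.le ha0lt, ha0sq]
  set δ : ℝ := min (1/2) ((gA Γ 0) ^ 2) with hδdef
  have hδpos : 0 < δ := lt_min (by norm_num) (by positivity)
  have hδle : δ ≤ 1/2 := min_le_left _ _
  have hsqrtδ : Real.sqrt δ ≤ gA Γ 0 := by
    calc Real.sqrt δ ≤ Real.sqrt ((gA Γ 0) ^ 2) := Real.sqrt_le_sqrt (min_le_right _ _)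
    _ = gA Γ 0 := Real.sqrt_sq hg0.le
  set c : ℝ := max a0 (Real.sqrt (1 - δ)) with hcdef
  have hc1 : c < 1 := by
    apply max_lt ha0lt
    have h9 : Real.sqrt (1 - δ) < Real.sqrt 1 := Real.sqrt_lt_sqrt (by linarith) (by linarith)
    simpa using h9
  have hc0 : 0 < c := lt_max_of_lt_left ha0pos
  -- continuity on Icc 0 c
  have hmaps : Set.MapsTo (fun a : ℝ => a ^ 2) (Set.Icc 0 c) (Set.Ico 0 1) := by
    intro a ha
    show a ^ 2 ∈ Set.Ico (0:ℝ) 1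
    constructor
    · positivity
    · nlinarith [ha.1, ha.2, hc1]
  have hcont : ContinuousOn (fun a => Kexp a Γ) (Set.Icc 0 c) := by
    apply ContinuousOn.congr
      (((g_contOn Γ hΓ0 hΓ1).comp ((continuous_pow 2).continuousOn) hmaps))
    intro a ha
    exact kexp_eq Γ a hΓ0 hΓ1 ha.1 (by nlinarith [ha.2, hc1])
  obtain ⟨astar, hastar, hmax⟩ :=
    (isCompact_Icc : IsCompact (Set.Icc (0:ℝ) c)).exists_isMaxOn
      (Set.nonempty_Icc.mpr hc0.le) hcont
  have hmax' : ∀ a ∈ Set.Icc (0:ℝ) c, Kexp a Γ ≤ Kexp astar Γ := fun a ha => hmax ha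
  have ha0mem : a0 ∈ Set.Icc (0:ℝ) c := ⟨ha0pos.le, le_max_left _ _⟩
  have hstrict : Kexp 0 Γ < Kexp astar Γ := by
    calc Kexp 0 Γ = gA Γ 0 := hK0
    _ < gA Γ s0 := hgt
    _ = Kexp a0 Γ := hKa0.symm
    _ ≤ Kexp astar Γ := hmax' a0 ha0mem
  have hastar0 : 0 < astar := by
    rcases eq_or_lt_of_le hastar.1 with h | h
    · exact absurd hstrict (by rw [← h]; exact lt_irrefl _)
    · exact h
  refine ⟨astar, ⟨hastar0, lt_of_le_of_lt hastar.2 hc1⟩, ?_, hstrict⟩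
  intro a ha
  by_cases hac : a ≤ c
  · exact hmax' a ⟨ha.1, hac⟩
  · push_neg at hac
    have ha2 : 1 - a ^ 2 < δ := by
      have h1 : Real.sqrt (1 - δ) < a := lt_of_le_of_lt (le_max_right _ _) hac
      have h2 : (1:ℝ) - δ < a ^ 2 := by
        have := Real.sq_sqrt (show (0:ℝ) ≤ 1 - δ by linarith)
        nlinarith [Real.sqrt_nonneg (1 - δ)]
      linarith
    have hb : Kexp a Γ ≤ (3/4) * Real.sqrt (1 - a ^ 2) := by
      rw [kexp_eq Γ a hΓ0 hΓ1 ha.1 ha.2]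
      exact g_bound Γ (a ^ 2) hΓ0 hΓ1 (by positivity) (by nlinarith [ha.1, ha.2])
    have hsq : Real.sqrt (1 - a ^ 2) ≤ Real.sqrt δ := Real.sqrt_le_sqrt ha2.le
    refine le_of_lt ?_
    calc Kexp a Γ ≤ (3/4) * Real.sqrt (1 - a ^ 2) := hb
    _ ≤ (3/4) * gA Γ 0 := by nlinarith [Real.sqrt_nonneg (1 - a ^ 2)]
    _ < gA Γ 0 := by linarith
    _ = Kexp 0 Γ := hK0.symm
    _ < Kexp astar Γ := hstrict
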